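/- Let A be a Banach *-algebra and a ∈ A. If there exists x ∈ A with ax² = x, a²x = axa, and a − axa quasinilpotent, then setting z = xax one has az² = z = zaz, a²z = aza, and a − aza is quasinilpotent. In particular a has a generalized right Drazin inverse. -/
import Mathlib


open Filter Topology

/-- `q` is quasinilpotent: `‖qⁿ‖^{1/n} → 0`. -/
def Quasinilpotent {A : Type*} [NormedRing A] (q : A) : Prop :=
  Tendsto (fun n : ℕ => ‖q ^ n‖ ^ (1 / (n : ℝ))) atTop (𝓝 0)

/-- If ax² = x, a²x = axa and a − axa is quasinilpotent, then z = xax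
satisfies az² = z = zaz, a²z = aza, and a − aza is quasinilpotent; in particular
`a` has a generalized right Drazin inverse. -/
theorem generalized_right_drazin_of_weak
    {A : Type*} [NormedRing A] [StarRing A] [NormedAlgebra ℂ A] [CompleteSpace A]
    (a x : A) (h1 : a * x ^ 2 = x) (h2 : a ^ 2 * x = a * x * a)
    (h3 : Quasinilpotent (a - a * x * a)) :
    (a * (x * a * x) ^ 2 = x * a * x ∧ (x * a * x) * a * (x * a * x) = x * a * x ∧
      a ^ 2 * (x * a * x) = a * (x * a * x) * a ∧
      Quasinilpotent (a - a * (x * a * x) * a)) ∧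
    (∃ z : A, a * z ^ 2 = z ∧ z * a * z = z ∧ a ^ 2 * z = a * z * a ∧
      Quasinilpotent (a - a * z * a)) := by
  have k1 : a * x * x = x := by rw [sq, ← mul_assoc] at h1; exact h1
  have k2 : a * a * x = a * x * a := by rw [sq] at h2; exact h2
  have e0 : a * x * a * x * a = a * x * a := by
    calc a * x * a * x * a = a * a * x * x * a := by rw [← k2]
      _ = a * (a * x * x) * a := by noncomm_ring
      _ = a * x * a := by rw [k1]
  have eaz : a * (x * a * x) * a = a * x * a := by
    have h : a * (x * a * x) * a = a * x * a * x * a := by noncomm_ring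
    rw [h, e0]
  have g1 : a * (x * a * x) ^ 2 = x * a * x := by
    calc a * (x * a * x) ^ 2 = (a * x) * (a * x * x) * (a * x) := by noncomm_ring
      _ = x * (a * x) := by rw [k1, k1]
      _ = x * a * x := by noncomm_ring
  have zax : x * a * x * a * x = x * a * x := by
    calc x * a * x * a * x = x * (a * x * a) * x := by noncomm_ring
      _ = x * (a * a * x) * x := by rw [← k2]
      _ = x * a * (a * x * x) := by noncomm_ring
      _ = x * a * x := by rw [k1]
  have g2 : (x * a * x) * a * (x * a * x) = x * a * x := by
    calc (x * a * x) * a * (x * a * x) = (x * a * x * a * x) * (a * x) := by noncomm_ring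
      _ = (x * a * x) * (a * x) := by rw [zax]
      _ = x * a * x * a * x := by noncomm_ring
      _ = x * a * x := zax
  have g3 : a ^ 2 * (x * a * x) = a * (x * a * x) * a := by
    have L : a ^ 2 * (x * a * x) = a * x * a := by
      calc a ^ 2 * (x * a * x) = (a ^ 2 * x) * a * x := by noncomm_ring
        _ = a * x * a * a * x := by rw [h2]
        _ = a * x * (a * a * x) := by noncomm_ring
        _ = a * x * (a * x * a) := by rw [k2]
        _ = a * x * a * x * a := by noncomm_ring
        _ = a * x * a := e0
    rw [L, eaz]
  have q : Quasinilpotent (a - a * (x * a * x) * a) := by rw [eaz]; exact h3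
  exact ⟨⟨g1, g2, g3, q⟩, ⟨x * a * x, g1, g2, g3, q⟩⟩
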